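/- Let f and g be symmetric functions of degree at most n. If f[Ξ_μ] = g[Ξ_μ] for every partition μ with |μ| ≥ n, then f = g. -/

import Mathlib

open scoped BigOperators

/-- Same eigenvalue collection, as a multiset. -/
noncomputable def xiM (μ : Multiset ℕ) : Multiset ℂ :=
  μ.bind fun r => (Multiset.range r).map fun k =>
    Complex.exp (2 * Real.pi * Complex.I * k / r)

/-- Evaluation of the power sum `p_n` on a multiset of values. -/
noncomputable def pEvalM (n : ℕ) (S : Multiset ℂ) : ℂ := (S.map (· ^ n)).sum

/-- The ring of symmetric functions, modeled as polynomials in the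
(algebraically independent) power sums `p_1, p_2, …`:  variable `k : ℕ+` stands for `p_k`. -/
abbrev SymF := MvPolynomial ℕ+ ℂ

/-- Evaluation of a symmetric function at the eigenvalues `Ξ_μ` of a permutation
matrix of cycle type `μ` (each `p_k` goes to `p_k[Ξ_μ]`). -/
noncomputable def evalXi (μ : Multiset ℕ) (f : SymF) : ℂ :=
  MvPolynomial.eval (fun k : ℕ+ => pEvalM (k : ℕ) (xiM μ)) f

open MvPolynomial

lemma root_sum (k r : ℕ) (hk : 0 < k) :
    ((Multiset.range r).map (fun j : ℕ =>
      Complex.exp (2 * Real.pi * Complex.I * j / r) ^ k)).sum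
      = if r ∣ k then (r : ℂ) else 0 := by
  rcases Nat.eq_zero_or_pos r with hr | hr
  · subst hr
    simp [Nat.zero_dvd, hk.ne']
  have hrC : (r : ℂ) ≠ 0 := Nat.cast_ne_zero.mpr hr.ne'
  set ζ : ℂ := Complex.exp (2 * Real.pi * Complex.I * k / r) with hζ
  have hterm : ∀ j : ℕ, Complex.exp (2 * Real.pi * Complex.I * j / r) ^ k = ζ ^ j := by
    intro j
    rw [hζ, ← Complex.exp_nat_mul, ← Complex.exp_nat_mul]
    ring_nf
  have hsum : ((Multiset.range r).map (fun j : ℕ =>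
      Complex.exp (2 * Real.pi * Complex.I * j / r) ^ k)).sum
      = ∑ j ∈ Finset.range r, ζ ^ j := by
    rw [Finset.sum_eq_multiset_sum]
    simp only [Finset.range_val]
    congr 1
    exact Multiset.map_congr rfl (fun j _ => hterm j)
  rw [hsum]
  by_cases hdvd : r ∣ k
  · obtain ⟨m, rfl⟩ := hdvd
    have hζ1 : ζ = 1 := by
      rw [hζ]
      have : 2 * Real.pi * Complex.I * (↑(r * m)) / r = (m : ℂ) * (2 * Real.pi * Complex.I) := by
        push_cast
        field_simp
      rw [this]
      exact_mod_cast Complex.exp_int_mul_two_pi_mul_I (m : ℤ)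
    simp [hζ1]
  · have hζ1 : ζ ≠ 1 := by
      intro h1
      obtain ⟨m, hm⟩ := Complex.exp_eq_one_iff.mp (hζ ▸ h1)
      apply hdvd
      have h2 : (2 * Real.pi * Complex.I : ℂ) ≠ 0 := by
        simp [Real.pi_ne_zero, Complex.I_ne_zero]
      have hC : (k : ℂ) = (m : ℂ) * r := by
        field_simp at hm
        apply mul_left_cancel₀ h2
        rw [show (2 * Real.pi * Complex.I) * ((m:ℂ) * r) = (m:ℂ) * (2 * Real.pi * Complex.I) * r by ring]
        linear_combination (2 * Real.pi * Complex.I) * hm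
      have hint : (k : ℤ) = m * r := by exact_mod_cast hC
      refine Int.ofNat_dvd.mp ?_
      exact ⟨m, by rw [hint]; ring⟩
    have hζr : ζ ^ r = 1 := by
      rw [hζ, ← Complex.exp_nat_mul]
      have : (r : ℂ) * (2 * Real.pi * Complex.I * k / r) = (k : ℂ) * (2 * Real.pi * Complex.I) := by
        field_simp
      rw [this]
      exact_mod_cast Complex.exp_int_mul_two_pi_mul_I (k : ℤ)
    rw [geom_sum_eq hζ1, hζr]
    simp [hdvd]

lemma pEvalM_xiM (k : ℕ) (hk : 0 < k) (μ : Multiset ℕ) :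
    pEvalM k (xiM μ) = (μ.map (fun r => if r ∣ k then (r : ℂ) else 0)).sum := by
  unfold pEvalM xiM
  rw [Multiset.map_bind, Multiset.sum_bind]
  congr 1
  apply Multiset.map_congr rfl
  intro r _
  simpa [Multiset.map_map, Function.comp] using root_sum k r hk

/-- the `(m.map φ).sum` additive hom -/
noncomputable def msum (φ : ℕ → ℂ) : Multiset ℕ →+ ℂ where
  toFun m := (m.map φ).sum
  map_zero' := by simp
  map_add' := by intro a b; simp

lemma sum_map_toMultiset (b : ℕ →₀ ℕ) (φ : ℕ → ℂ) :
    ((Finsupp.toMultiset b).map φ).sum = ∑ r ∈ b.support, (b r : ℂ) * φ r := by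
  have : ((Finsupp.toMultiset b).map φ).sum = msum φ (Finsupp.toMultiset b) := rfl
  rw [this, Finsupp.toMultiset_apply, Finsupp.sum, map_sum]
  apply Finset.sum_congr rfl
  intro r _
  rw [map_nsmul]
  simp [msum, nsmul_eq_mul]
  left
  show (Multiset.map φ {r}).sum = φ r
  simp

lemma eval_point (k : ℕ) (hk : 0 < k) (a : ℕ →₀ ℕ) :
    pEvalM k (xiM (Finsupp.toMultiset (a.erase 0))) = ∑ d ∈ k.divisors, (d : ℂ) * a d := by
  classical
  rw [pEvalM_xiM k hk, sum_map_toMultiset]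
  set ψ : ℕ → ℂ := fun d => if d ∣ k then (d : ℂ) * a d else 0 with hψ
  set T := (a.erase 0).support ∪ k.divisors with hT
  have h1 : ∑ r ∈ (a.erase 0).support, ((a.erase 0) r : ℂ) * (if r ∣ k then (r : ℂ) else 0)
      = ∑ r ∈ T, ψ r := by
    have e1 : ∑ r ∈ (a.erase 0).support, ((a.erase 0) r : ℂ) * (if r ∣ k then (r : ℂ) else 0)
        = ∑ r ∈ (a.erase 0).support, ψ r := by
      apply Finset.sum_congr rfl
      intro r hr
      have hr0 : r ≠ 0 := by
        intro h0
        rw [h0, Finsupp.support_erase] at hr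
        exact (Finset.notMem_erase 0 _) hr
      have har : (a.erase 0) r = a r := Finsupp.erase_ne hr0
      rw [hψ, har]
      by_cases hd : r ∣ k <;> simp [hd, mul_comm]
    rw [e1]
    apply Finset.sum_subset Finset.subset_union_left
    · intro r _ hrs
      rw [hψ]
      simp only [Finsupp.notMem_support_iff] at hrs
      by_cases hd : r ∣ k
      · rcases Nat.eq_zero_or_pos r with rfl | hr0
        · exact absurd (Nat.zero_dvd.mp hd) hk.ne'
        · have har : a r = 0 := by rwa [Finsupp.erase_ne (by omega : r ≠ 0)] at hrs
          simp [hd, har]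
      · simp [hd]
  have h2 : ∑ d ∈ k.divisors, (d : ℂ) * a d = ∑ r ∈ T, ψ r := by
    have e2 : ∑ d ∈ k.divisors, (d : ℂ) * a d = ∑ d ∈ k.divisors, ψ d := by
      apply Finset.sum_congr rfl
      intro d hd
      rw [hψ]
      simp [Nat.mem_divisors.mp hd |>.1]
    rw [e2]
    apply Finset.sum_subset Finset.subset_union_right
    · intro d _ hd
      rw [hψ]
      have : ¬ d ∣ k := fun hdvd => hd (Nat.mem_divisors.mpr ⟨hdvd, hk.ne'⟩)
      simp [this]
  rw [h1, h2]

lemma gridFin (m : ℕ) (p : MvPolynomial (Fin m) ℂ) (S : Fin m → Set ℂ)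
    (hS : ∀ i, (S i).Infinite)
    (h : ∀ x : Fin m → ℂ, (∀ i, x i ∈ S i) → MvPolynomial.eval x p = 0) : p = 0 := by
  induction m with
  | zero =>
    have h0 := h (fun i => i.elim0) (fun i => i.elim0)
    rw [eq_C_of_isEmpty p] at h0 ⊢
    rw [eval_C] at h0
    rw [h0, map_zero]
  | succ m ih =>
    have hp : finSuccEquiv ℂ m p = 0 := by
      apply Polynomial.ext
      intro i
      rw [Polynomial.coeff_zero]
      apply ih _ (fun j => S j.succ) (fun j => hS j.succ)
      intro y hy
      have hmap : (finSuccEquiv ℂ m p).map (MvPolynomial.eval y) = 0 := by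
        apply Polynomial.eq_zero_of_infinite_isRoot
        apply (hS 0).mono
        intro z hz
        simp only [Set.mem_setOf_eq, Polynomial.IsRoot.def]
        rw [← eval_eq_eval_mv_eval']
        apply h
        intro j
        refine Fin.cases ?_ ?_ j
        · simpa using hz
        · intro j'; simpa using hy j'
      have := congrArg (fun q => Polynomial.coeff q i) hmap
      simpa [Polynomial.coeff_map] using this
    have := congrArg (finSuccEquiv ℂ m).symm hp
    simpa using this

lemma gridNat (n : ℕ) (p : MvPolynomial ℕ ℂ)
    (h : ∀ a : ℕ →₀ ℕ, n ≤ a 1 → MvPolynomial.eval (fun i => (a i : ℂ)) p = 0) : p = 0 := by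
  classical
  obtain ⟨m, φ, hφ, q, rfl⟩ := exists_fin_rename p
  suffices hq : q = 0 by rw [hq, map_zero]
  apply gridFin m q (fun j => (fun b : ℕ => (b : ℂ)) '' {b : ℕ | φ j = 1 → n ≤ b})
  · intro j
    apply Set.Infinite.image
    · intro u _ v _ huv
      exact Nat.cast_injective huv
    · apply Set.Infinite.mono (s := {b : ℕ | n ≤ b})
      · intro b hb _; exact hb
      · apply Set.infinite_of_not_bddAbove
        rintro ⟨B, hB⟩
        have : n + B + 1 ≤ B := hB (show n ≤ n + B + 1 by omega)
        omega
  · intro x hx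
    choose b hb hxb using hx
    set A : ℕ →₀ ℕ := ∑ j : Fin m, Finsupp.single (φ j) (b j) with hA
    have hAφ : ∀ j, A (φ j) = b j := by
      intro j
      rw [hA, Finsupp.finset_sum_apply]
      rw [Finset.sum_eq_single j]
      · simp
      · intro j' _ hne
        rw [Finsupp.single_apply, if_neg (fun hc => hne (hφ hc))]
      · simp
    set c : ℕ := if ∃ j, φ j = 1 then 0 else n with hc
    set a : ℕ →₀ ℕ := A + Finsupp.single 1 c with ha
    have haφ : ∀ j, a (φ j) = b j := by
      intro j
      rw [ha, Finsupp.add_apply, hAφ, Finsupp.single_apply]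
      by_cases h1 : 1 = φ j
      · rw [if_pos h1, hc, if_pos ⟨j, h1.symm⟩]
        simp
      · rw [if_neg h1, add_zero]
    have han : n ≤ a 1 := by
      by_cases h1 : ∃ j, φ j = 1
      · obtain ⟨j0, hj0⟩ := h1
        have := haφ j0
        rw [hj0] at this
        rw [this]
        exact hb j0 hj0
      · rw [ha, Finsupp.add_apply, Finsupp.single_apply, if_pos rfl, hc, if_neg h1]
        simp
    have key := h a han
    rw [eval_rename] at key
    have hx' : (fun i => ((a i : ℕ) : ℂ)) ∘ φ = x := by
      funext j
      simp only [Function.comp_apply]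
      rw [haφ j]
      exact hxb j
    rw [← hx']
    exact key

noncomputable def solveDiv (x : ℕ → ℂ) (k : ℕ) : ℂ :=
  (x k - ∑ d ∈ (k.divisors.erase k).attach, (d : ℂ) * solveDiv x d) / k
termination_by k
decreasing_by
  have hd := d.2
  rw [Finset.mem_erase, Nat.mem_divisors] at hd
  exact lt_of_le_of_ne (Nat.le_of_dvd (Nat.pos_of_ne_zero hd.2.2) hd.2.1) hd.1

lemma solveDiv_spec (x : ℕ → ℂ) (k : ℕ) (hk : 0 < k) :
    ∑ d ∈ k.divisors, (d : ℂ) * solveDiv x d = x k := by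
  have hmem : k ∈ k.divisors := Nat.mem_divisors_self k hk.ne'
  rw [← Finset.add_sum_erase _ _ hmem]
  have hsolve : solveDiv x k
      = (x k - ∑ d ∈ (k.divisors.erase k).attach, (d : ℂ) * solveDiv x d) / k := by
    rw [solveDiv]
  have hattach : ∑ d ∈ (k.divisors.erase k).attach, ((d : ℕ) : ℂ) * solveDiv x d
      = ∑ d ∈ k.divisors.erase k, (d : ℂ) * solveDiv x d :=
    Finset.sum_attach _ (fun (d : ℕ) => (d : ℂ) * solveDiv x d)
  rw [hsolve, hattach]
  have hkC : (k : ℂ) ≠ 0 := Nat.cast_ne_zero.mpr hk.ne'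
  field_simp
  ring


/-- Two symmetric functions (polynomials in the power sums `p_k`, `k : ℕ+`) of degree at
most `n` which agree at the eigenvalues `Ξ_μ` of permutation matrices for all partitions
`μ` with `|μ| ≥ n` are equal. -/
theorem symF_eq_of_eval_large (n : ℕ) (f g : SymF)
    (hf : ∀ m ∈ f.support, (m.sum fun k e => (k : ℕ) * e) ≤ n)
    (hg : ∀ m ∈ g.support, (m.sum fun k e => (k : ℕ) * e) ≤ n)
    (h : ∀ μ : Multiset ℕ, (∀ i ∈ μ, 0 < i) → n ≤ μ.sum → evalXi μ f = evalXi μ g) :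
    f = g := by
  classical
  set Y : ℕ → MvPolynomial ℕ ℂ := fun k => ∑ d ∈ k.divisors, C (d : ℂ) * X d with hY
  set G : MvPolynomial ℕ ℂ :=
    bind₁ Y (rename (fun k : ℕ+ => (k : ℕ)) (f - g)) with hG
  have hGeval : ∀ c : ℕ → ℂ, eval c G
      = eval (fun k : ℕ+ => ∑ d ∈ ((k : ℕ)).divisors, (d : ℂ) * c d) (f - g) := by
    intro c
    rw [hG]
    have e1 : eval c (bind₁ Y (rename (fun k : ℕ+ => (k : ℕ)) (f - g)))
        = eval (fun i => eval c (Y i)) (rename (fun k : ℕ+ => (k : ℕ)) (f - g)) :=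
      eval₂Hom_bind₁ (RingHom.id ℂ) c Y _
    rw [e1, eval_rename]
    have hfun : ((fun i => eval c (Y i)) ∘ fun k : ℕ+ => (k : ℕ))
        = fun k : ℕ+ => ∑ d ∈ ((k : ℕ)).divisors, (d : ℂ) * c d := by
      funext k
      simp [hY]
    rw [hfun]
  have hG0 : G = 0 := by
    apply gridNat n
    intro a han
    rw [hGeval]
    set μ : Multiset ℕ := Finsupp.toMultiset (a.erase 0) with hμ
    have hpos : ∀ i ∈ μ, 0 < i := by
      intro i hi
      rw [hμ, Finsupp.mem_toMultiset, Finsupp.support_erase] at hi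
      have := Finset.ne_of_mem_erase hi
      omega
    have hsum : n ≤ μ.sum := by
      have hsum_eq : μ.sum = (a.erase 0).sum fun r m => m * r := by
        rw [hμ, Finsupp.toMultiset_apply, Finsupp.multiset_sum_sum]
        apply Finsupp.sum_congr
        intro r _
        rw [Multiset.nsmul_singleton, Multiset.sum_replicate, smul_eq_mul]
      rcases Nat.eq_zero_or_pos (a 1) with h10 | h11
      · omega
      · have h1mem : (1 : ℕ) ∈ (a.erase 0).support := by
          rw [Finsupp.mem_support_iff, Finsupp.erase_ne (by omega : (1:ℕ) ≠ 0)]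
          omega
        have : (a.erase 0) 1 * 1 ≤ (a.erase 0).sum fun r m => m * r := by
          exact Finset.single_le_sum (f := fun r => (a.erase 0) r * r)
            (fun i _ => Nat.zero_le _) h1mem
        rw [Finsupp.erase_ne (by omega : (1:ℕ) ≠ 0)] at this
        omega
    have hfg := h μ hpos hsum
    have hpt : (fun k : ℕ+ => ∑ d ∈ ((k : ℕ)).divisors, (d : ℂ) * a d)
        = fun k : ℕ+ => pEvalM (k : ℕ) (xiM μ) := by
      funext k
      rw [hμ]
      exact (eval_point (k : ℕ) k.pos a).symm
    rw [hpt, map_sub]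
    rw [sub_eq_zero]
    exact hfg
  have hall : ∀ x : ℕ+ → ℂ, eval x (f - g) = 0 := by
    intro x
    set x' : ℕ → ℂ := fun m => if hm : 0 < m then x ⟨m, hm⟩ else 0 with hx'
    have hkey := hGeval (solveDiv x')
    rw [hG0, map_zero] at hkey
    have hpt : (fun k : ℕ+ => ∑ d ∈ ((k : ℕ)).divisors, (d : ℂ) * solveDiv x' d) = x := by
      funext k
      rw [solveDiv_spec x' (k : ℕ) k.pos, hx']
      simp only [k.pos, dif_pos]
      rfl
    rw [hpt] at hkey
    exact hkey.symm
  apply MvPolynomial.funext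
  intro x
  have := hall x
  rw [map_sub, sub_eq_zero] at this
  exact this
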